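/- For every dimension d ≥ 1, every p ∈ (1,∞) with Hölder conjugate q = p/(p−1), every α > 0 and every ε > 0, the heat kernel satisfies the exact identity ‖Φ_ε‖_{𝒮𝒲^{−α,p}} = ε^{(α − d/q)/2} · (4π)^{−d/2} · 𝒮𝓑₀(ε, α, p, d)^{1/p}, where 𝒮𝓑₀(ε, α, p, d) = ∫_{ℝ^d} (∫₀^{1/ε} s^{α−1} (1+s)^{−d} exp(−|y|²/(2(1+s))) ds)^{p/2} dy. -/

import Mathlib

open MeasureTheory ProbabilityTheory Real Filter
open scoped ENNReal Topology Classical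

noncomputable section

abbrev Esp (d : ℕ) := EuclideanSpace ℝ (Fin d)

/-- The heat kernel on `ℝ^d`. -/
def heatK (d : ℕ) (t : ℝ) (x : Esp d) : ℝ :=
  (4 * π * t) ^ (-(d : ℝ) / 2) * Real.exp (-‖x‖ ^ 2 / (4 * t))

/-- The `𝒮𝒲^{-α,p}` norm, applied to the heat evolution `u t = distribution * Φ_t`. -/
def scrWNorm (d : ℕ) (α p : ℝ) (u : ℝ → Esp d → ℝ) : ℝ≥0∞ :=
  (∫⁻ x : Esp d, (∫⁻ t in Set.Ioc (0:ℝ) 1, ENNReal.ofReal (t ^ (α - 1)) *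
      ENNReal.ofReal ((u t x) ^ 2)) ^ ((p : ℝ) / 2)) ^ (1 / p)

/-- Heat evolution of `Φ_ε` (of `δ₀` when `ε = 0`): `Φ_ε * Φ_t = Φ_{t+ε}`. -/
def phiEvol (d : ℕ) (ε : ℝ) : ℝ → Esp d → ℝ := fun t x => heatK d (t + ε) x

/-! ### auxiliary lemmas -/


lemma lintegral_Ioc_scale {c b : ℝ} (hc : 0 < c) (f : ℝ → ℝ≥0∞) :
    ∫⁻ t in Set.Ioc 0 b, f t = ENNReal.ofReal c * ∫⁻ s in Set.Ioc 0 (b / c), f (c * s) := by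
  have hc' : c ≠ 0 := ne_of_gt hc
  have hpre : (fun s : ℝ => c * s) ⁻¹' Set.Ioc 0 b = Set.Ioc 0 (b / c) := by
    ext s
    simp only [Set.mem_preimage, Set.mem_Ioc]
    constructor
    · rintro ⟨h1, h2⟩
      have hs : 0 < s := by
        rcases mul_pos_iff.1 h1 with ⟨-, h⟩ | ⟨h, -⟩
        · exact h
        · linarith
      refine ⟨hs, (le_div_iff₀ hc).2 ?_⟩
      linarith [mul_comm c s]
    · rintro ⟨h1, h2⟩
      refine ⟨mul_pos hc h1, ?_⟩
      rw [mul_comm]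
      exact (le_div_iff₀ hc).1 h2
  have key : ∫⁻ s in Set.Ioc 0 (b / c), f (c * s)
      = ∫⁻ t, f t ∂(Measure.map (fun s : ℝ => c * s) (volume.restrict (Set.Ioc 0 (b / c)))) := by
    have := MeasureTheory.lintegral_map_equiv (μ := volume.restrict (Set.Ioc 0 (b / c))) f
      (MeasurableEquiv.smul₀ c hc')
    simpa [smul_eq_mul] using this.symm
  rw [key, ← hpre, ← Measure.restrict_map (measurable_const_mul c) measurableSet_Ioc,
    Real.map_volume_mul_left hc', Measure.restrict_smul, lintegral_smul_measure,
    abs_of_pos (inv_pos.2 hc), smul_eq_mul, ← mul_assoc, ← ENNReal.ofReal_mul hc.le,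
    mul_inv_cancel₀ hc', ENNReal.ofReal_one, one_mul]

lemma lintegral_esp_scale {d : ℕ} {r : ℝ} (hr : 0 < r) (f : Esp d → ℝ≥0∞) :
    ∫⁻ x, f x = ENNReal.ofReal (r ^ d) * ∫⁻ y, f (r • y) := by
  have hr' : r ≠ 0 := ne_of_gt hr
  have key : ∫⁻ y, f (r • y)
      = ∫⁻ x, f x ∂(Measure.map (fun y : Esp d => r • y) volume) := by
    have := MeasureTheory.lintegral_map_equiv (μ := (volume : Measure (Esp d))) f
      (MeasurableEquiv.smul₀ r hr')
    simpa using this.symm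
  rw [key, Measure.map_addHaar_smul volume hr', lintegral_smul_measure, smul_eq_mul, ← mul_assoc,
    finrank_euclideanSpace_fin, abs_of_pos (inv_pos.2 (pow_pos hr d)),
    ← ENNReal.ofReal_mul (pow_pos hr d).le, mul_inv_cancel₀ (ne_of_gt (pow_pos hr d)),
    ENNReal.ofReal_one, one_mul]

lemma integrable_gauss (d : ℕ) {b : ℝ} (hb : 0 < b) :
    Integrable (fun y : Esp d => Real.exp (-b * ‖y‖ ^ 2)) := by
  have h := (GaussianFourier.integrable_cexp_neg_mul_sq_norm_add
    (V := Esp d) (b := (b : ℂ)) (by simpa using hb) 0 0)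
  have key : ∀ v : Esp d,
      -(b : ℂ) * (‖v‖ : ℂ) ^ 2 + 0 * ((inner ℝ (0 : Esp d) v : ℝ) : ℂ) = ((-b * ‖v‖ ^ 2 : ℝ) : ℂ) := by
    intro v; push_cast; ring
  refine h.re.congr (Filter.Eventually.of_forall fun v => ?_)
  simp only [key, ← Complex.ofReal_exp, RCLike.re_to_complex, Complex.ofReal_re]

/-- The inner real integrand. -/
def swF (d : ℕ) (α : ℝ) (y : Esp d) (s : ℝ) : ℝ :=
  s ^ (α - 1) * ((1 + s) ^ (-(d : ℝ)) * Real.exp (-‖y‖ ^ 2 / (2 * (1 + s))))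

lemma swF_meas (d : ℕ) (α : ℝ) : Measurable (Function.uncurry (swF d α)) := by
  unfold swF Function.uncurry
  fun_prop

lemma swF_nonneg (d : ℕ) (α : ℝ) (y : Esp d) {s : ℝ} (hs : 0 < s) : 0 ≤ swF d α y s := by
  unfold swF
  have h1 : (0:ℝ) < 1 + s := by linarith
  positivity

lemma rpow_base_integrableOn {α B : ℝ} (hα : 0 < α) (hB : 0 < B) :
    IntegrableOn (fun s : ℝ => s ^ (α - 1)) (Set.Ioc 0 B) := by
  have := intervalIntegral.intervalIntegrable_rpow' (a := 0) (b := B)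
    (by linarith : (-1:ℝ) < α - 1)
  rwa [intervalIntegrable_iff_integrableOn_Ioc_of_le hB.le] at this

lemma swF_factor_le_one (d : ℕ) (y : Esp d) {s : ℝ} (hs : 0 < s) :
    (1 + s) ^ (-(d : ℝ)) * Real.exp (-‖y‖ ^ 2 / (2 * (1 + s))) ≤ 1 := by
  have h1 : (1:ℝ) ≤ 1 + s := by linarith
  have h2 : (1 + s) ^ (-(d : ℝ)) ≤ 1 :=
    Real.rpow_le_one_of_one_le_of_nonpos h1 (by simp only [neg_nonpos]; positivity)
  have h3 : Real.exp (-‖y‖ ^ 2 / (2 * (1 + s))) ≤ 1 := by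
    rw [Real.exp_le_one_iff]
    have : (0:ℝ) < 2 * (1 + s) := by linarith
    rw [neg_div]
    simp only [neg_nonpos]
    positivity
  calc (1 + s) ^ (-(d : ℝ)) * Real.exp (-‖y‖ ^ 2 / (2 * (1 + s)))
      ≤ 1 * 1 := by
        apply mul_le_mul h2 h3 (Real.exp_nonneg _) zero_le_one
    _ = 1 := mul_one 1

lemma swF_integrableOn (d : ℕ) {α B : ℝ} (hα : 0 < α) (hB : 0 < B) (y : Esp d) :
    IntegrableOn (swF d α y) (Set.Ioc 0 B) := by
  refine Integrable.mono' (rpow_base_integrableOn hα hB)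
    ((swF_meas d α).comp (measurable_const.prodMk measurable_id)).aestronglyMeasurable ?_
  filter_upwards [ae_restrict_mem measurableSet_Ioc] with s hs
  have h1 : 0 ≤ s ^ (α - 1) := Real.rpow_nonneg hs.1.le _
  have h2 : 0 ≤ swF d α y s := swF_nonneg d α y hs.1
  rw [Real.norm_eq_abs, abs_of_nonneg h2]
  calc swF d α y s ≤ s ^ (α - 1) * 1 :=
        mul_le_mul_of_nonneg_left (swF_factor_le_one d y hs.1) h1
    _ = s ^ (α - 1) := mul_one _

lemma swI_nonneg (d : ℕ) (α B : ℝ) (y : Esp d) :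
    0 ≤ ∫ s in Set.Ioc 0 B, swF d α y s := by
  apply setIntegral_nonneg measurableSet_Ioc
  intro s hs
  exact swF_nonneg d α y hs.1

lemma swI_le (d : ℕ) {α B : ℝ} (hα : 0 < α) (hB : 0 < B) (y : Esp d) :
    ∫ s in Set.Ioc 0 B, swF d α y s ≤
      (∫ s in Set.Ioc 0 B, s ^ (α - 1)) * Real.exp (-(1 / (2 * (1 + B))) * ‖y‖ ^ 2) := by
  rw [← MeasureTheory.integral_mul_const]
  apply setIntegral_mono_on (swF_integrableOn d hα hB y)
    ((rpow_base_integrableOn hα hB).mul_const _) measurableSet_Ioc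
  intro s hs
  have hs1 : (0:ℝ) < 1 + s := by linarith [hs.1]
  have hsB : (0:ℝ) < 1 + B := by linarith
  have h1 : 0 ≤ s ^ (α - 1) := Real.rpow_nonneg hs.1.le _
  unfold swF
  apply mul_le_mul_of_nonneg_left _ h1
  have h2 : (1 + s) ^ (-(d : ℝ)) ≤ 1 :=
    Real.rpow_le_one_of_one_le_of_nonpos (by linarith [hs.1]) (by
      simp only [neg_nonpos]; positivity)
  have h3 : Real.exp (-‖y‖ ^ 2 / (2 * (1 + s))) ≤ Real.exp (-(1 / (2 * (1 + B))) * ‖y‖ ^ 2) := by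
    apply Real.exp_le_exp.2
    have hss : 2 * (1 + s) ≤ 2 * (1 + B) := by linarith [hs.2]
    have h4 : ‖y‖ ^ 2 / (2 * (1 + B)) ≤ ‖y‖ ^ 2 / (2 * (1 + s)) :=
      div_le_div_of_nonneg_left (by positivity) (by linarith) hss
    calc -‖y‖ ^ 2 / (2 * (1 + s)) = -(‖y‖ ^ 2 / (2 * (1 + s))) := by rw [neg_div]
      _ ≤ -(‖y‖ ^ 2 / (2 * (1 + B))) := neg_le_neg h4
      _ = -(1 / (2 * (1 + B))) * ‖y‖ ^ 2 := by ring
  calc (1 + s) ^ (-(d : ℝ)) * Real.exp (-‖y‖ ^ 2 / (2 * (1 + s)))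
      ≤ 1 * Real.exp (-(1 / (2 * (1 + B))) * ‖y‖ ^ 2) :=
        mul_le_mul h2 h3 (Real.exp_nonneg _) zero_le_one
    _ = Real.exp (-(1 / (2 * (1 + B))) * ‖y‖ ^ 2) := one_mul _

lemma swI_sm (d : ℕ) (α B : ℝ) :
    StronglyMeasurable (fun y : Esp d => ∫ s in Set.Ioc 0 B, swF d α y s) := by
  have : StronglyMeasurable (Function.uncurry (swF d α)) := (swF_meas d α).stronglyMeasurable
  exact this.integral_prod_right

lemma swI_pow_integrable (d : ℕ) {α B p : ℝ} (hα : 0 < α) (hB : 0 < B) (hp : 0 < p) :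
    Integrable (fun y : Esp d => (∫ s in Set.Ioc 0 B, swF d α y s) ^ (p / 2)) := by
  set A := ∫ s in Set.Ioc 0 B, (s : ℝ) ^ (α - 1) with hA
  have hA0 : 0 ≤ A := setIntegral_nonneg measurableSet_Ioc fun s hs => Real.rpow_nonneg hs.1.le _
  set c : ℝ := 1 / (2 * (1 + B)) with hc
  have hc0 : 0 < c := by positivity
  have hmaj : Integrable (fun y : Esp d => A ^ (p / 2) * Real.exp (-(c * (p / 2)) * ‖y‖ ^ 2)) :=
    (integrable_gauss d (by positivity)).const_mul _
  refine hmaj.mono' ((swI_sm d α B).measurable.pow_const (p / 2)).aestronglyMeasurable ?_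
  filter_upwards with y
  have h0 := swI_nonneg d α B y
  have h1 := swI_le d hα hB y
  rw [Real.norm_eq_abs, abs_of_nonneg (Real.rpow_nonneg h0 _)]
  calc (∫ s in Set.Ioc 0 B, swF d α y s) ^ (p / 2)
      ≤ (A * Real.exp (-c * ‖y‖ ^ 2)) ^ (p / 2) :=
        Real.rpow_le_rpow h0 h1 (by positivity)
    _ = A ^ (p / 2) * Real.exp (-(c * (p / 2)) * ‖y‖ ^ 2) := by
        rw [Real.mul_rpow hA0 (Real.exp_nonneg _), ← Real.exp_mul]
        ring_nf


/-- Exact formula for `‖Φ_ε‖_{𝒮𝒲^{-α,p}}`. -/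
theorem scrWNorm_heat_kernel_eq
    (d : ℕ) (hd : 1 ≤ d) (p α ε : ℝ) (hp : 1 < p) (hα : 0 < α) (hε : 0 < ε) :
    scrWNorm d α p (phiEvol d ε) =
      ENNReal.ofReal (ε ^ ((α - (d : ℝ) / (p / (p - 1))) / 2) * (4 * π) ^ (-(d : ℝ) / 2) *
        (∫ y : Esp d, (∫ s in Set.Ioc (0 : ℝ) (1 / ε),
            s ^ (α - 1) * (1 + s) ^ (-(d : ℝ)) *
              Real.exp (-‖y‖ ^ 2 / (2 * (1 + s)))) ^ (p / 2)) ^ (1 / p)) := by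
  have hp0 : (0:ℝ) < p := by linarith
  have hpne : p ≠ 0 := ne_of_gt hp0
  have hp1 : p - 1 ≠ 0 := by intro h; nlinarith
  have hB : (0:ℝ) < 1 / ε := by positivity
  have hπ : (0:ℝ) < 4 * π := by positivity
  set c₀ : ℝ := ε ^ (α - (d:ℝ)) * (4 * π) ^ (-(d:ℝ)) with hc₀def
  have hc₀ : 0 < c₀ := by positivity
  set r : ℝ := ε ^ ((1:ℝ)/2) with hrdef
  have hr : 0 < r := Real.rpow_pos_of_pos hε _
  set G : Esp d → ℝ → ℝ := fun x s =>
    s ^ (α - 1) * ((1 + s) ^ (-(d : ℝ)) * Real.exp (-‖x‖ ^ 2 / (2 * ε * (1 + s)))) with hGdef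
  set H : Esp d → ℝ≥0∞ := fun x =>
    ∫⁻ s in Set.Ioc (0:ℝ) (1/ε), ENNReal.ofReal (G x s) with hHdef
  set I : Esp d → ℝ := fun y => ∫ s in Set.Ioc (0:ℝ) (1/ε), swF d α y s with hIdef
  set J : ℝ := ∫ y : Esp d, (I y) ^ (p/2) with hJdef
  have hJ0 : 0 ≤ J := by
    rw [hJdef]
    exact integral_nonneg fun y => Real.rpow_nonneg (swI_nonneg d α (1/ε) y) _
  -- Step 1 : the inner integral
  have hinner : ∀ x : Esp d,
      (∫⁻ t in Set.Ioc (0:ℝ) 1, ENNReal.ofReal (t ^ (α - 1)) *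
        ENNReal.ofReal ((phiEvol d ε t x) ^ 2))
      = ENNReal.ofReal c₀ * H x := by
    intro x
    rw [lintegral_Ioc_scale hε
      (fun t => ENNReal.ofReal (t ^ (α - 1)) * ENNReal.ofReal ((phiEvol d ε t x) ^ 2))]
    have hptw : ∀ s ∈ Set.Ioc (0:ℝ) (1/ε),
        ENNReal.ofReal ((ε * s) ^ (α - 1)) * ENNReal.ofReal ((phiEvol d ε (ε * s) x) ^ 2)
        = ENNReal.ofReal (ε ^ (α - 1) * ((4*π) ^ (-(d:ℝ)) * ε ^ (-(d:ℝ)))) *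
          ENNReal.ofReal (G x s) := by
      intro s hs
      have hs0 : 0 < s := hs.1
      have h1s : (0:ℝ) < 1 + s := by linarith
      have hT : (0:ℝ) < ε * s + ε := by positivity
      have h2s : (0:ℝ) < 2 * ε * (1 + s) := mul_pos (mul_pos two_pos hε) h1s
      have h4T : (0:ℝ) < 4 * (ε * s + ε) := by positivity
      rw [← ENNReal.ofReal_mul (by positivity), ← ENNReal.ofReal_mul (by positivity)]
      congr 1
      show (ε * s) ^ (α - 1) * heatK d (ε * s + ε) x ^ 2 = _
      unfold heatK
      rw [mul_pow, ← Real.rpow_natCast ((4*π*(ε*s+ε)) ^ (-(d:ℝ)/2)) 2,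
        ← Real.rpow_mul (by positivity),
        show (-(d:ℝ)/2 * ((2:ℕ):ℝ)) = -(d:ℝ) by push_cast; ring,
        ← Real.exp_nat_mul,
        show ((2:ℕ):ℝ) * (-‖x‖^2 / (4 * (ε*s+ε))) = -‖x‖^2 / (2 * ε * (1 + s)) by
          push_cast
          rw [mul_div_assoc', div_eq_div_iff h4T.ne' h2s.ne']
          ring,
        show ε*s+ε = ε*(1+s) by ring,
        Real.mul_rpow (by positivity : (0:ℝ) ≤ 4*π) (mul_nonneg hε.le h1s.le),
        Real.mul_rpow hε.le h1s.le,
        Real.mul_rpow hε.le hs0.le]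
      simp only [hGdef]
      ring
    rw [setLIntegral_congr_fun measurableSet_Ioc hptw,
      lintegral_const_mul' _ _ ENNReal.ofReal_ne_top, ← mul_assoc,
      ← ENNReal.ofReal_mul hε.le]
    have hcc : ε * (ε ^ (α-1) * ((4*π) ^ (-(d:ℝ)) * ε ^ (-(d:ℝ)))) = c₀ := by
      have e1 : ε ^ (α - (d:ℝ)) = ε ^ (1:ℝ) * ε ^ (α-1) * ε ^ (-(d:ℝ)) := by
        rw [← Real.rpow_add hε, ← Real.rpow_add hε]
        congr 1
        ring
      rw [hc₀def, e1, Real.rpow_one]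
      ring
    rw [hcc]
  -- Step 2 : the outer integral
  have hH_eq : ∀ y : Esp d, H (r • y) = ENNReal.ofReal (I y) := by
    intro y
    have hnorm : ‖r • y‖ ^ 2 = ε * ‖y‖ ^ 2 := by
      rw [norm_smul, Real.norm_eq_abs, abs_of_pos hr, mul_pow, hrdef,
        ← Real.rpow_natCast (ε ^ ((1:ℝ)/2)) 2, ← Real.rpow_mul hε.le]
      norm_num
    have h1 : ∀ s ∈ Set.Ioc (0:ℝ) (1/ε),
        ENNReal.ofReal (G (r • y) s) = ENNReal.ofReal (swF d α y s) := by
      intro s hs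
      have h1s : (0:ℝ) < 1 + s := by linarith [hs.1]
      have h2s : (0:ℝ) < 2 * ε * (1 + s) := mul_pos (mul_pos two_pos hε) h1s
      have h2s' : (0:ℝ) < 2 * (1 + s) := mul_pos two_pos h1s
      congr 1
      simp only [hGdef]
      unfold swF
      rw [hnorm]
      have harg : -(ε * ‖y‖ ^ 2) / (2 * ε * (1 + s)) = -‖y‖ ^ 2 / (2 * (1 + s)) := by
        rw [div_eq_div_iff h2s.ne' h2s'.ne']
        ring
      rw [harg]
    simp only [hHdef]
    rw [setLIntegral_congr_fun measurableSet_Ioc h1,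
      ← MeasureTheory.ofReal_integral_eq_lintegral_ofReal (swF_integrableOn d hα hB y)
        (((ae_restrict_mem measurableSet_Ioc).mono fun s hs => swF_nonneg d α y hs.1))]
  have houter : (∫⁻ x : Esp d, (∫⁻ t in Set.Ioc (0:ℝ) 1, ENNReal.ofReal (t ^ (α - 1)) *
        ENNReal.ofReal ((phiEvol d ε t x) ^ 2)) ^ ((p:ℝ)/2))
      = (ENNReal.ofReal c₀) ^ (p/2) * (ENNReal.ofReal (r ^ d) * ENNReal.ofReal (J)) := by
    calc (∫⁻ x : Esp d, (∫⁻ t in Set.Ioc (0:ℝ) 1, ENNReal.ofReal (t ^ (α - 1)) *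
          ENNReal.ofReal ((phiEvol d ε t x) ^ 2)) ^ ((p:ℝ)/2))
        = ∫⁻ x : Esp d, (ENNReal.ofReal c₀) ^ (p/2) * (H x) ^ (p/2) := by
          refine lintegral_congr fun x => ?_
          rw [hinner x, ENNReal.mul_rpow_of_nonneg _ _ (by positivity)]
      _ = (ENNReal.ofReal c₀) ^ (p/2) * ∫⁻ x : Esp d, (H x) ^ (p/2) :=
          lintegral_const_mul' _ _
            (ENNReal.rpow_ne_top_of_nonneg (by positivity) ENNReal.ofReal_ne_top)
      _ = (ENNReal.ofReal c₀) ^ (p/2) *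
            (ENNReal.ofReal (r ^ d) * ∫⁻ y : Esp d, (H (r • y)) ^ (p/2)) := by
          rw [lintegral_esp_scale hr (fun x => (H x) ^ (p/2))]
      _ = (ENNReal.ofReal c₀) ^ (p/2) * (ENNReal.ofReal (r ^ d) * ENNReal.ofReal (J)) := by
          congr 1
          congr 1
          calc (∫⁻ y : Esp d, (H (r • y)) ^ (p/2))
              = ∫⁻ y : Esp d, ENNReal.ofReal ((I y) ^ (p/2)) := by
                refine lintegral_congr fun y => ?_
                rw [hH_eq y, ENNReal.ofReal_rpow_of_nonneg (swI_nonneg d α (1/ε) y)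
                  (by positivity)]
            _ = ENNReal.ofReal J := by
                rw [hJdef, MeasureTheory.ofReal_integral_eq_lintegral_ofReal
                  (swI_pow_integrable d hα hB hp0)
                  (Filter.Eventually.of_forall fun y =>
                    Real.rpow_nonneg (swI_nonneg d α (1/ε) y) _)]
  -- Step 3 : assemble
  unfold scrWNorm
  rw [houter,
    ENNReal.mul_rpow_of_nonneg _ _ (by positivity : (0:ℝ) ≤ 1/p),
    ENNReal.mul_rpow_of_nonneg _ _ (by positivity : (0:ℝ) ≤ 1/p),
    ← ENNReal.rpow_mul,
    show p/2 * (1/p) = (1:ℝ)/2 by field_simp,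
    ENNReal.ofReal_rpow_of_pos hc₀,
    ENNReal.ofReal_rpow_of_pos (by positivity : (0:ℝ) < r ^ d),
    ENNReal.ofReal_rpow_of_nonneg hJ0 (by positivity : (0:ℝ) ≤ 1/p),
    ← ENNReal.ofReal_mul (Real.rpow_nonneg (pow_nonneg hr.le d) _),
    ← ENNReal.ofReal_mul (Real.rpow_nonneg hc₀.le _)]
  congr 1
  have hJeq : (∫ y : Esp d, (∫ s in Set.Ioc (0:ℝ) (1/ε),
      s ^ (α - 1) * (1 + s) ^ (-(d : ℝ)) * Real.exp (-‖y‖ ^ 2 / (2 * (1 + s)))) ^ (p/2)) = J := by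
    rw [hJdef]
    simp only [hIdef]
    unfold swF
    simp_rw [mul_assoc]
  rw [hJeq]
  have e2 : c₀ ^ ((1:ℝ)/2) = ε ^ ((α - (d:ℝ))/2) * (4*π) ^ (-(d:ℝ)/2) := by
    rw [hc₀def, Real.mul_rpow (Real.rpow_nonneg hε.le _) (Real.rpow_nonneg hπ.le _),
      ← Real.rpow_mul hε.le, ← Real.rpow_mul hπ.le]
    congr 1
    · congr 1
      ring
    · congr 1
      ring
  have e3 : ((r ^ d : ℝ)) ^ ((1:ℝ)/p) = ε ^ ((d:ℝ)/(2*p)) := by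
    rw [hrdef, ← Real.rpow_natCast (ε ^ ((1:ℝ)/2)) d, ← Real.rpow_mul hε.le,
      ← Real.rpow_mul hε.le]
    congr 1
    ring
  have e4 : ε ^ ((α - (d:ℝ))/2) * ε ^ ((d:ℝ)/(2*p)) = ε ^ ((α - (d:ℝ)/(p/(p-1)))/2) := by
    rw [← Real.rpow_add hε]
    congr 1
    field_simp
    ring
  rw [e2, e3, ← e4]
  ring

end
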